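/- There exists a constant c > 0 depending only on M such that for every t ∈ ℝ, every ε > 0, every smooth M-periodic zero-mean ω̃ with Fourier support in {k : k₁ ≠ 0} and every smooth zero-mean zonal function ω̄ (depending on y only): |(B_Ω(ω̃,ω̃), ω̄)| ≤ c·‖ω̃‖_{L²}·‖∇ω̃‖_{L²}·‖ω̄‖_{L²}^{1/2}·‖∂_yω̄‖_{L²}^{1/2}, where (B_Ω(ω̃,ω̃), ω̄) := (|M|/(2i))·∑' l₂·ω̃_j·ω̃_k·conj(ω̄_l)·e^{−i(Ω_j+Ω_k)t/ε}, the sum ∑' being over all j, k ∈ Z_L with j₁ ≠ 0, k₁ ≠ 0, l := j + k having l₁ = 0, and Ω_j + Ω_k ≠ 0. -/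

import Mathlib

noncomputable section

open scoped Real

/-- The physical wavenumber in the dual lattice `Z_L` attached to the integer index `n`. -/
def wn (L₁ L₂ : ℝ) (n : ℤ × ℤ) : ℝ × ℝ :=
  (2 * Real.pi * (n.1 : ℝ) / L₁, 2 * Real.pi * (n.2 : ℝ) / L₂)

/-- `|k|²` for a wavenumber `k ∈ ℝ²`. -/
def ksq (k : ℝ × ℝ) : ℝ := k.1 ^ 2 + k.2 ^ 2

/-- The wedge product `j ∧ k = j₁k₂ − j₂k₁`. -/
def wedge (j k : ℝ × ℝ) : ℝ := j.1 * k.2 - j.2 * k.1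

/-- Squared `Hˢ` norm `‖(−Δ)^{s/2} w‖²_{L²}` of a zero-mean field on the torus
`M = [0,L₁] × [−L₂/2,L₂/2]`, computed from its Fourier coefficients `c` via Parseval. -/
def hsq (L₁ L₂ : ℝ) (s : ℝ) (c : ℤ × ℤ → ℂ) : ℝ :=
  (L₁ * L₂) * ∑' n : ℤ × ℤ, ksq (wn L₁ L₂ n) ^ s * ‖c n‖ ^ 2

/-- The `L²(M)` inner product `(a,b)_{L²} = ∫_M a conj(b)`, via Fourier coefficients. -/
def ip (L₁ L₂ : ℝ) (a b : ℤ × ℤ → ℂ) : ℂ :=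
  ((L₁ * L₂ : ℝ) : ℂ) * ∑' n : ℤ × ℤ, a n * (starRingEnd ℂ) (b n)

/-- Interaction coefficient `(j∧k)/|j|²` of the nonlinearity `B`. -/
def bcoef (L₁ L₂ : ℝ) (j k : ℤ × ℤ) : ℝ :=
  if j = 0 then 0 else wedge (wn L₁ L₂ j) (wn L₁ L₂ k) / ksq (wn L₁ L₂ j)

/-- Fourier coefficients of `B(a,b) := (∇⊥Δ⁻¹a)·∇b` (a convolution). -/
def bconv (L₁ L₂ : ℝ) (a b : ℤ × ℤ → ℂ) (l : ℤ × ℤ) : ℂ :=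
  ∑' p : ℤ × ℤ, ((bcoef L₁ L₂ p (l - p) : ℝ) : ℂ) * a p * b (l - p)

/-- `Ω_k := −k₁/|k|²`, i times the eigenvalue of `L = ∂ₓΔ⁻¹` at wavenumber `k`. -/
def Om (L₁ L₂ : ℝ) (n : ℤ × ℤ) : ℝ := -(wn L₁ L₂ n).1 / ksq (wn L₁ L₂ n)

/-- Rapid decay of Fourier coefficients: the field is smooth on the torus. -/
def regular (L₁ L₂ : ℝ) (c : ℤ × ℤ → ℂ) : Prop :=
  ∀ s : ℝ, Summable fun n : ℤ × ℤ => (1 + ksq (wn L₁ L₂ n)) ^ s * ‖c n‖ ^ 2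

/-- The Fourier coefficients of a real-valued field. -/
def realField (c : ℤ × ℤ → ℂ) : Prop := ∀ n, c (-n) = (starRingEnd ℂ) (c n)

/-- Non-zonal (fast) part: Fourier modes with `k₁ ≠ 0`. -/
def tilde (c : ℤ × ℤ → ℂ) : ℤ × ℤ → ℂ := fun n => if n.1 = 0 then 0 else c n

/-- Zonal (slow) part: Fourier modes with `k₁ = 0`. -/
def zbar (c : ℤ × ℤ → ℂ) : ℤ × ℤ → ℂ := fun n => if n.1 = 0 then c n else 0

/-- The Poincaré constant `c₀` of the torus (the smallest nonzero wavenumber). -/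
def poin (L₁ L₂ : ℝ) : ℝ := min (2 * Real.pi / L₁) (2 * Real.pi / L₂)

/-- The coefficients of `∂ₓ c`. -/
def dx (L₁ L₂ : ℝ) (c : ℤ × ℤ → ℂ) : ℤ × ℤ → ℂ :=
  fun n => Complex.I * (((wn L₁ L₂ n).1 : ℝ) : ℂ) * c n

/-- The coefficients of `∂_y c`. -/
def dy (L₁ L₂ : ℝ) (c : ℤ × ℤ → ℂ) : ℤ × ℤ → ℂ :=
  fun n => Complex.I * (((wn L₁ L₂ n).2 : ℝ) : ℂ) * c n

/-- The coefficients of `Δc`. -/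
def lap (L₁ L₂ : ℝ) (c : ℤ × ℤ → ℂ) : ℤ × ℤ → ℂ :=
  fun n => -((ksq (wn L₁ L₂ n) : ℝ) : ℂ) * c n

/-- The operator `I_Ω`: Fourier multiplier with symbol `1/(iΩ_k) = i|k|²/k₁` on `k₁ ≠ 0`. -/
def iOm (L₁ L₂ : ℝ) (c : ℤ × ℤ → ℂ) : ℤ × ℤ → ℂ := fun n =>
  if n.1 = 0 then 0
  else Complex.I * ((ksq (wn L₁ L₂ n) / (wn L₁ L₂ n).1 : ℝ) : ℂ) * c n

/-- `B_{jkl} = |M| (j∧k)/|j|²` when `j + k = l`, and `0` otherwise. -/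
def bco (L₁ L₂ : ℝ) (nj nk nl : ℤ × ℤ) : ℝ :=
  if nj + nk = nl then L₁ * L₂ * wedge (wn L₁ L₂ nj) (wn L₁ L₂ nk) / ksq (wn L₁ L₂ nj)
  else 0

/-- Dot product on `ℝ²`. -/
def dotR (a b : ℝ × ℝ) : ℝ := a.1 * b.1 + a.2 * b.2

/-- The complex exponential `e^{i k·x}`. -/
def expf (k : ℝ × ℝ) (x : ℝ × ℝ) : ℂ := Complex.exp (Complex.I * ((dotR k x : ℝ) : ℂ))

/-- Directional derivative `∂_v g (x)`. -/
def pd (v : ℝ × ℝ) (g : ℝ × ℝ → ℂ) (x : ℝ × ℝ) : ℂ := fderiv ℝ g x v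

/-- `Δ⁻¹ e^{i j·x} := −e^{i j·x}/|j|²`. -/
def invLapExp (j : ℝ × ℝ) : ℝ × ℝ → ℂ := fun x => -expf j x / ((ksq j : ℝ) : ℂ)

/-- `B(e^{ij·x}, e^{ik·x}) = (∇⊥Δ⁻¹e^{ij·x})·∇e^{ik·x}` pointwise,
with `∇⊥ = (−∂_y, ∂_x)`. -/
def Bpt (j k : ℝ × ℝ) (x : ℝ × ℝ) : ℂ :=
  -pd (0, 1) (invLapExp j) x * pd (1, 0) (expf k) x
    + pd (1, 0) (invLapExp j) x * pd (0, 1) (expf k) x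

/-- The `L^∞(M)` norm of the field with Fourier coefficients `c`. -/
def linf (L₁ L₂ : ℝ) (c : ℤ × ℤ → ℂ) : ℝ :=
  ⨆ x : ℝ × ℝ, ‖∑' n : ℤ × ℤ, c n * Complex.exp (Complex.I * ((dotR (wn L₁ L₂ n) x : ℝ) : ℂ))‖

/-- Euclidean norm of an integer lattice point. -/
def zn (k : ℤ × ℤ) : ℝ := Real.sqrt ((k.1 : ℝ) ^ 2 + (k.2 : ℝ) ^ 2)

/-- A classical solution `ω` (in Fourier representation) of the β-plane vorticity equation
`∂ₜω + B(ω,ω) + (1/ε)Lω + μAω = f` on `M × (0,∞)`: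
smooth, `M`-periodic, real-valued and of zero spatial mean for every `t`,
with `f` smooth, periodic and zero-mean.  Mode by mode the equation reads
`d/dt ω_l = f_l − B(ω,ω)_l − (iΩ_l/ε) ω_l − μ|l|² ω_l`. -/
structure IsSolution (L₁ L₂ μ ε : ℝ) (ω f : ℝ → ℤ × ℤ → ℂ) : Prop where
  mean_ω : ∀ t, ω t 0 = 0
  mean_f : ∀ t, f t 0 = 0
  real_ω : ∀ t, realField (ω t)
  real_f : ∀ t, realField (f t)
  reg_ω : ∀ t, regular L₁ L₂ (ω t)
  reg_f : ∀ t, regular L₁ L₂ (f t)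
  cont_ω : ∀ n, Continuous fun t => ω t n
  eqn : ∀ t, 0 < t → ∀ l : ℤ × ℤ,
    HasDerivAt (fun τ => ω τ l)
      (f t l - bconv L₁ L₂ (ω t) (ω t) l
        - Complex.I * ((Om L₁ L₂ l : ℝ) : ℂ) / ((ε : ℝ) : ℂ) * ω t l
        - ((μ : ℝ) : ℂ) * ((ksq (wn L₁ L₂ l) : ℝ) : ℂ) * ω t l) t


/-- the bound on `(B_Ω(ω̃,ω̃), ω̄)`, (3.26) of the paper.  There is
`c > 0` depending only on `M` such that for every `t ∈ ℝ`, `ε > 0`, every smooth zero-mean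
real `ω̃` with Fourier support in `{k₁ ≠ 0}` and every smooth zero-mean zonal `ω̄`:
`|(B_Ω(ω̃,ω̃), ω̄)| ≤ c ‖ω̃‖ ‖∇ω̃‖ ‖ω̄‖^{1/2} ‖∂_y ω̄‖^{1/2}`, where
`(B_Ω(ω̃,ω̃), ω̄) = (|M|/2i) ∑' l₂ ω̃_j ω̃_k conj(ω̄_l) e^{−i(Ω_j+Ω_k)t/ε}`,
summing over nonresonant pairs `j₁ ≠ 0`, `k₁ ≠ 0`, `l = j + k`, `l₁ = 0`, `Ω_j + Ω_k ≠ 0`. -/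
-- ===== auxiliary lemmas =====
private lemma tele13 (lam : ℝ) (hlam : 1 ≤ lam) (M : ℕ) :
    ∑ n ∈ Finset.Icc 1 M, (1 : ℝ)/(lam^2 + (n:ℝ)^2) ≤ 2/lam := by
  have hpos : (0:ℝ) < lam := lt_of_lt_of_le one_pos hlam
  have key : ∀ M : ℕ, ∑ n ∈ Finset.Icc 1 M, (1 : ℝ)/(lam^2 + (n:ℝ)^2)
      ≤ 2/lam - 2/(lam + M) := by
    intro M
    induction M with
    | zero => simp
    | succ M ih =>
      rw [Finset.sum_Icc_succ_top (by omega : 1 ≤ M + 1)]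
      have h1 : (0:ℝ) < lam + M := by positivity
      have h2 : (0:ℝ) < lam + (M+1:ℕ) := by positivity
      have hstep : (1 : ℝ)/(lam^2 + ((M+1:ℕ):ℝ)^2) ≤ 2/(lam + M) - 2/(lam + (M+1:ℕ)) := by
        have hq : (0:ℝ) < lam^2 + ((M+1:ℕ):ℝ)^2 := by positivity
        rw [div_sub_div _ _ (ne_of_gt h1) (ne_of_gt h2), div_le_div_iff₀ hq (by positivity)]
        push_cast
        nlinarith [sq_nonneg (lam - (M:ℝ) - 1), sq_nonneg (lam - (M:ℝ))]
      push_cast at *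
      linarith
  have h2 : (0:ℝ) < lam + M := by positivity
  have h3 : 0 ≤ 2/(lam + M) := by positivity
  linarith [key M]

private lemma zsum13 (lam : ℝ) (hlam : 1 ≤ lam) (s : Finset ℤ) :
    ∑ m ∈ s.filter (fun m => m ≠ 0), (1 : ℝ)/(lam^2 + (m:ℝ)^2) ≤ 4/lam := by
  classical
  set M : ℕ := s.sup (fun m => m.natAbs) with hM
  have hcast : ∀ m : ℤ, ((m.natAbs : ℕ) : ℝ)^2 = (m:ℝ)^2 := by
    intro m
    rw [Nat.cast_natAbs]
    push_cast
    rw [sq_abs]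
  have hbound : ∀ u : Finset ℤ, u ⊆ s → (∀ m ∈ u, m ≠ 0) →
      (∀ x ∈ u, ∀ y ∈ u, x.natAbs = y.natAbs → x = y) →
      ∑ m ∈ u, (1 : ℝ)/(lam^2 + (m:ℝ)^2) ≤ 2/lam := by
    intro u hus hu0 huinj
    have heq : ∑ m ∈ u, (1 : ℝ)/(lam^2 + (m:ℝ)^2)
        = ∑ n ∈ u.image (fun m : ℤ => (m.natAbs : ℕ)), (1 : ℝ)/(lam^2 + (n:ℝ)^2) := by
      rw [Finset.sum_image (fun x hx y hy h => huinj x hx y hy (by exact_mod_cast h))]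
      refine Finset.sum_congr rfl (fun m _ => ?_)
      rw [hcast]
    rw [heq]
    have hsub : u.image (fun m : ℤ => (m.natAbs : ℕ)) ⊆ Finset.Icc 1 M := by
      intro n hn
      simp only [Finset.mem_image] at hn
      obtain ⟨m, hm, rfl⟩ := hn
      simp only [Finset.mem_Icc]
      constructor
      · have := Int.natAbs_pos.mpr (hu0 m hm)
        omega
      · exact Finset.le_sup (hus hm)
    have h1 : ∑ n ∈ u.image (fun m : ℤ => (m.natAbs : ℕ)), (1 : ℝ)/(lam^2 + (n:ℝ)^2)
        ≤ ∑ n ∈ Finset.Icc 1 M, (1 : ℝ)/(lam^2 + (n:ℝ)^2) :=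
      Finset.sum_le_sum_of_subset_of_nonneg hsub (fun i _ _ => by positivity)
    exact h1.trans (tele13 lam hlam M)
  have hpos := lt_of_lt_of_le one_pos hlam
  set t := s.filter (fun m => m ≠ 0) with ht
  have hsplit : t = t.filter (fun m => 0 < m) ∪ t.filter (fun m => m < 0) := by
    ext m
    simp only [Finset.mem_union, Finset.mem_filter, ht, Finset.mem_filter]
    constructor
    · rintro ⟨hm, hm0⟩
      rcases lt_or_gt_of_ne hm0 with h | h
      · exact Or.inr ⟨⟨hm, hm0⟩, h⟩
      · exact Or.inl ⟨⟨hm, hm0⟩, h⟩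
    · rintro (⟨h, _⟩ | ⟨h, _⟩) <;> exact h
  have hdisj : Disjoint (t.filter (fun m => 0 < m)) (t.filter (fun m => m < 0)) := by
    refine Finset.disjoint_left.mpr (fun m hm hm' => ?_)
    simp only [Finset.mem_filter] at hm hm'
    omega
  rw [hsplit, Finset.sum_union hdisj]
  have hp := hbound (t.filter (fun m => 0 < m))
    (fun m hm => by simp only [ht, Finset.mem_filter] at hm; exact hm.1.1)
    (fun m hm => by simp only [Finset.mem_filter] at hm; omega)
    (fun x hx y hy h => by
      simp only [Finset.mem_filter] at hx hy; omega)
  have hn := hbound (t.filter (fun m => m < 0))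
    (fun m hm => by simp only [ht, Finset.mem_filter] at hm; exact hm.1.1)
    (fun m hm => by simp only [Finset.mem_filter] at hm; omega)
    (fun x hx y hy h => by
      simp only [Finset.mem_filter] at hx hy; omega)
  have h4 : (4:ℝ)/lam = 2/lam + 2/lam := by ring
  rw [h4]
  exact add_le_add hp hn

private lemma agmon13 (c : ℤ → ℝ) (hc : ∀ m, 0 ≤ c m) (h0 : c 0 = 0)
    (h2 : Summable (fun m => c m ^ 2))
    (hm2 : Summable (fun m : ℤ => (m:ℝ)^2 * c m ^ 2)) :
    Summable c ∧ ∑' m, c m ≤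
      3 * Real.sqrt (Real.sqrt (∑' m : ℤ, (m:ℝ)^2 * c m ^ 2) * Real.sqrt (∑' m, c m ^ 2)) := by
  classical
  set X := ∑' m, c m ^ 2 with hX
  set Y := ∑' m : ℤ, (m:ℝ)^2 * c m ^ 2 with hY
  have hXnn : 0 ≤ X := tsum_nonneg (fun m => sq_nonneg _)
  have hYnn : 0 ≤ Y := tsum_nonneg (fun m => mul_nonneg (sq_nonneg _) (sq_nonneg _))
  have hXY : X ≤ Y := by
    refine Summable.tsum_le_tsum (fun m => ?_) h2 hm2
    rcases eq_or_ne m 0 with rfl | hm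
    · simp [h0]
    · have h1 : (1:ℝ) ≤ (m:ℝ)^2 := by
        have h2 : (1:ℤ) ≤ m^2 := by
          rcases lt_or_gt_of_ne hm with h | h <;> nlinarith
        exact_mod_cast h2
      nlinarith [sq_nonneg (c m)]
  by_cases hX0 : X = 0
  · have hc0 : ∀ m, c m = 0 := by
      intro m
      have hle : c m ^ 2 ≤ X := Summable.le_tsum h2 m (fun j _ => sq_nonneg _)
      nlinarith [sq_nonneg (c m), hc m]
    have hcz : c = fun _ => (0:ℝ) := funext hc0
    constructor
    · rw [hcz]; exact summable_zero
    · rw [hcz]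
      simp only [tsum_zero]
      positivity
  · have hXpos : 0 < X := lt_of_le_of_ne hXnn (Ne.symm hX0)
    have hYpos : 0 < Y := lt_of_lt_of_le hXpos hXY
    set lam := Real.sqrt Y / Real.sqrt X with hlamdef
    have hsX : 0 < Real.sqrt X := Real.sqrt_pos.mpr hXpos
    have hsY : 0 < Real.sqrt Y := Real.sqrt_pos.mpr hYpos
    have hlam : 1 ≤ lam := by
      rw [hlamdef, le_div_iff₀ hsX, one_mul]
      exact Real.sqrt_le_sqrt hXY
    have hlampos : 0 < lam := lt_of_lt_of_le one_pos hlam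
    have hlamsq : lam ^ 2 = Y / X := by
      rw [hlamdef, div_pow, Real.sq_sqrt hYnn, Real.sq_sqrt hXnn]
    have hYlam : Y / lam = Real.sqrt Y * Real.sqrt X := by
      rw [hlamdef, div_div_eq_mul_div, div_eq_iff (ne_of_gt hsY)]
      rw [mul_comm (Real.sqrt Y) (Real.sqrt X), mul_assoc, Real.mul_self_sqrt hYnn]
      ring
    have key : ∀ s : Finset ℤ, ∑ m ∈ s, c m ≤ 3 * Real.sqrt (Real.sqrt Y * Real.sqrt X) := by
      intro s
      set t := s.filter (fun m => m ≠ 0) with htdef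
      have hts : ∑ m ∈ s, c m = ∑ m ∈ t, c m := by
        rw [htdef]
        exact (Finset.sum_filter_of_ne (fun x _ hx => by
          rintro rfl; exact hx h0)).symm
      rw [hts]
      have hq : ∀ m : ℤ, (0:ℝ) < lam^2 + (m:ℝ)^2 := fun m => by positivity
      have hCS := Finset.sum_mul_sq_le_sq_mul_sq t
        (fun m => Real.sqrt (1/(lam^2 + (m:ℝ)^2)))
        (fun m => Real.sqrt (lam^2 + (m:ℝ)^2) * c m)
      have hfg : ∀ m : ℤ, Real.sqrt (1/(lam^2 + (m:ℝ)^2)) *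
          (Real.sqrt (lam^2 + (m:ℝ)^2) * c m) = c m := by
        intro m
        rw [← mul_assoc, ← Real.sqrt_mul (by positivity), one_div,
          inv_mul_cancel₀ (ne_of_gt (hq m)), Real.sqrt_one, one_mul]
      have hf2 : ∀ m : ℤ, Real.sqrt (1/(lam^2 + (m:ℝ)^2)) ^ 2 = 1/(lam^2 + (m:ℝ)^2) :=
        fun m => Real.sq_sqrt (by positivity)
      have hg2 : ∀ m : ℤ, (Real.sqrt (lam^2 + (m:ℝ)^2) * c m) ^ 2
          = lam^2 * c m ^2 + (m:ℝ)^2 * c m ^2 := by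
        intro m
        rw [mul_pow, Real.sq_sqrt (hq m).le]
        ring
      simp only [hfg, hf2, hg2] at hCS
      have hA : ∑ m ∈ t, 1/(lam^2 + (m:ℝ)^2) ≤ 4/lam := zsum13 lam hlam s
      have hB : ∑ m ∈ t, (lam^2 * c m ^2 + (m:ℝ)^2 * c m ^2) ≤ 2 * Y := by
        rw [Finset.sum_add_distrib, ← Finset.mul_sum]
        have h1 : ∑ m ∈ t, c m ^ 2 ≤ X := by
          rw [hX]
          exact Summable.sum_le_tsum t (fun m _ => sq_nonneg _) h2
        have h2' : ∑ m ∈ t, (m:ℝ)^2 * c m ^ 2 ≤ Y := by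
          rw [hY]
          exact Summable.sum_le_tsum t (fun m _ => mul_nonneg (sq_nonneg _) (sq_nonneg _)) hm2
        have h3 : lam ^ 2 * ∑ m ∈ t, c m ^ 2 ≤ Y := by
          rw [hlamsq]
          calc Y / X * ∑ m ∈ t, c m ^2 ≤ Y / X * X := by
                refine mul_le_mul_of_nonneg_left h1 (by positivity)
            _ = Y := div_mul_cancel₀ Y (ne_of_gt hXpos)
        linarith
      have hsum_nonneg : 0 ≤ ∑ m ∈ t, c m := Finset.sum_nonneg (fun m _ => hc m)
      have hsq : (∑ m ∈ t, c m) ^ 2 ≤ 8 * (Real.sqrt Y * Real.sqrt X) := by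
        calc (∑ m ∈ t, c m) ^2 ≤ (∑ m ∈ t, 1/(lam^2 + (m:ℝ)^2))
              * ∑ m ∈ t, (lam^2 * c m ^2 + (m:ℝ)^2 * c m ^2) := hCS
          _ ≤ (4/lam) * (2*Y) := by
              refine mul_le_mul hA hB ?_ (by positivity)
              exact Finset.sum_nonneg (fun m _ => by positivity)
          _ = 8 * (Y / lam) := by ring
          _ = 8 * (Real.sqrt Y * Real.sqrt X) := by rw [hYlam]
      have h38 : Real.sqrt 8 ≤ 3 := by
        nlinarith [Real.sq_sqrt (by norm_num : (0:ℝ) ≤ 8), Real.sqrt_nonneg 8]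
      calc ∑ m ∈ t, c m ≤ Real.sqrt (8 * (Real.sqrt Y * Real.sqrt X)) :=
            (Real.le_sqrt hsum_nonneg (by positivity)).mpr hsq
        _ = Real.sqrt 8 * Real.sqrt (Real.sqrt Y * Real.sqrt X) := by
            rw [Real.sqrt_mul (by norm_num)]
        _ ≤ 3 * Real.sqrt (Real.sqrt Y * Real.sqrt X) := by
            refine mul_le_mul_of_nonneg_right h38 (Real.sqrt_nonneg _)
    exact ⟨summable_of_sum_le hc key, Summable.tsum_le_of_sum_le (summable_of_sum_le hc key) key⟩

private lemma conv_bound13 (g h β : ℤ × ℤ → ℝ)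
    (hg : ∀ n, 0 ≤ g n) (hh : ∀ n, 0 ≤ h n) (hβ : ∀ n, 0 ≤ β n)
    (hg2 : Summable (fun n => g n ^ 2)) (hh2 : Summable (fun n => h n ^ 2))
    (hβ1 : Summable β) :
    (∀ s : Finset ((ℤ × ℤ) × (ℤ × ℤ)),
        ∑ p ∈ s, g p.1 * h p.2 * β (p.1 + p.2)
          ≤ Real.sqrt (∑' n, g n ^ 2) * Real.sqrt (∑' n, h n ^ 2) * ∑' n, β n) := by
  classical
  intro s
  set G := ∑' n, g n ^ 2 with hG
  set H := ∑' n, h n ^ 2 with hH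
  have hGnn : 0 ≤ G := tsum_nonneg (fun n => sq_nonneg _)
  have hHnn : 0 ≤ H := tsum_nonneg (fun n => sq_nonneg _)
  have hBnn : 0 ≤ ∑' n, β n := tsum_nonneg hβ
  have e_inj : ∀ p ∈ s, ∀ q ∈ s, (fun p : (ℤ×ℤ)×(ℤ×ℤ) => (p.1, p.1 + p.2)) p
      = (fun p : (ℤ×ℤ)×(ℤ×ℤ) => (p.1, p.1 + p.2)) q → p = q := by
    intro p _ q _ hpq
    simp only [Prod.mk.injEq] at hpq
    obtain ⟨h1, h2⟩ := hpq
    have h3 : p.2 = q.2 := by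
      rw [h1] at h2
      exact add_left_cancel h2
    exact Prod.ext h1 h3
  have heq : ∑ p ∈ s, g p.1 * h p.2 * β (p.1 + p.2)
      = ∑ q ∈ s.image (fun p : (ℤ×ℤ)×(ℤ×ℤ) => (p.1, p.1 + p.2)),
          g q.1 * h (q.2 - q.1) * β q.2 := by
    rw [Finset.sum_image e_inj]
    refine Finset.sum_congr rfl (fun p _ => ?_)
    simp
  rw [heq]
  set t := s.image (fun p : (ℤ×ℤ)×(ℤ×ℤ) => (p.1, p.1 + p.2)) with htdef
  set t₁ := t.image Prod.fst with ht1
  set t₂ := t.image Prod.snd with ht2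
  have hsub : t ⊆ t₁ ×ˢ t₂ := by
    intro q hq
    simp only [Finset.mem_product, ht1, ht2, Finset.mem_image]
    exact ⟨⟨q, hq, rfl⟩, ⟨q, hq, rfl⟩⟩
  have hstep : ∑ q ∈ t, g q.1 * h (q.2 - q.1) * β q.2
      ≤ ∑ q ∈ t₁ ×ˢ t₂, g q.1 * h (q.2 - q.1) * β q.2 :=
    Finset.sum_le_sum_of_subset_of_nonneg hsub
      (fun q _ _ => mul_nonneg (mul_nonneg (hg _) (hh _)) (hβ _))
  refine hstep.trans ?_
  rw [Finset.sum_product]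
  have inner_bound : ∀ l : ℤ × ℤ, ∑ j ∈ t₁, g j * h (l - j)
      ≤ Real.sqrt G * Real.sqrt H := by
    intro l
    have hCS := Finset.sum_mul_sq_le_sq_mul_sq t₁ g (fun j => h (l - j))
    have h1 : ∑ j ∈ t₁, g j ^ 2 ≤ G := by
      rw [hG]; exact Summable.sum_le_tsum t₁ (fun j _ => sq_nonneg _) hg2
    have h2 : ∑ j ∈ t₁, h (l - j) ^ 2 ≤ H := by
      have himg : ∑ j ∈ t₁, h (l - j) ^ 2
          = ∑ n ∈ t₁.image (fun j => l - j), h n ^ 2 :=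
        (Finset.sum_image (f := fun n => h n ^ 2) (g := fun j => l - j)
          (fun x _ y _ hxy => sub_right_injective hxy)).symm
      rw [himg, hH]
      exact Summable.sum_le_tsum _ (fun n _ => sq_nonneg _) hh2
    have hnn : 0 ≤ ∑ j ∈ t₁, g j * h (l - j) :=
      Finset.sum_nonneg (fun j _ => mul_nonneg (hg j) (hh _))
    have h3 : (∑ j ∈ t₁, g j * h (l - j)) ^ 2 ≤ G * H :=
      hCS.trans (mul_le_mul h1 h2 (Finset.sum_nonneg (fun j _ => sq_nonneg _)) hGnn)
    have h4 := (Real.le_sqrt hnn (by positivity)).mpr h3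
    rwa [Real.sqrt_mul hGnn] at h4
  calc ∑ j ∈ t₁, ∑ l ∈ t₂, g j * h (l - j) * β l
      = ∑ l ∈ t₂, (∑ j ∈ t₁, g j * h (l - j)) * β l := by
        rw [Finset.sum_comm]
        refine Finset.sum_congr rfl (fun l _ => ?_)
        rw [Finset.sum_mul]
    _ ≤ ∑ l ∈ t₂, (Real.sqrt G * Real.sqrt H) * β l := by
        refine Finset.sum_le_sum (fun l _ => ?_)
        exact mul_le_mul_of_nonneg_right (inner_bound l) (hβ l)
    _ = (Real.sqrt G * Real.sqrt H) * ∑ l ∈ t₂, β l := by rw [Finset.mul_sum]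
    _ ≤ (Real.sqrt G * Real.sqrt H) * ∑' n, β n := by
        refine mul_le_mul_of_nonneg_left ?_ (by positivity)
        exact Summable.sum_le_tsum t₂ (fun n _ => hβ n) hβ1


theorem statement13 (L₁ L₂ : ℝ) (hL₁ : 0 < L₁) (hL₂ : 0 < L₂) :
    ∃ c : ℝ, 0 < c ∧
      ∀ (t ε : ℝ), 0 < ε →
        ∀ a b : ℤ × ℤ → ℂ,
          realField a → regular L₁ L₂ a → (∀ n : ℤ × ℤ, n.1 = 0 → a n = 0) →
          realField b → regular L₁ L₂ b → b 0 = 0 →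
          (∀ n : ℤ × ℤ, n.1 ≠ 0 → b n = 0) →
          ‖((L₁ * L₂ : ℝ) : ℂ) / (2 * Complex.I) *
              ∑' p : {q : (ℤ × ℤ) × (ℤ × ℤ) //
                  q.1.1 ≠ 0 ∧ q.2.1 ≠ 0 ∧ (q.1 + q.2).1 = 0 ∧
                    Om L₁ L₂ q.1 + Om L₁ L₂ q.2 ≠ 0},
                (((wn L₁ L₂ (p.1.1 + p.1.2)).2 : ℝ) : ℂ) * a p.1.1 * a p.1.2 *
                  (starRingEnd ℂ) (b (p.1.1 + p.1.2)) *
                  Complex.exp (-Complex.I *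
                    ((Om L₁ L₂ p.1.1 + Om L₁ L₂ p.1.2 : ℝ) : ℂ) * ((t : ℝ) : ℂ) /
                      ((ε : ℝ) : ℂ))‖
            ≤ c * Real.sqrt (hsq L₁ L₂ 0 a) * Real.sqrt (hsq L₁ L₂ 1 a) *
                Real.sqrt (Real.sqrt (hsq L₁ L₂ 0 b)) *
                Real.sqrt (Real.sqrt (hsq L₁ L₂ 0 (dy L₁ L₂ b))) := by
  classical
  have hM : 0 < L₁ * L₂ := mul_pos hL₁ hL₂
  have hπ : 0 < Real.pi := Real.pi_pos
  refine ⟨3 / Real.sqrt (2 * Real.pi * L₁), by positivity, ?_⟩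
  intro t ε hε a b ha_real ha_reg ha_supp hb_real hb_reg hb0 hb_supp
  have hksq_nn : ∀ k : ℝ × ℝ, 0 ≤ ksq k := fun k => add_nonneg (sq_nonneg _) (sq_nonneg _)
  -- summability facts
  have hg2 : Summable (fun n : ℤ × ℤ => ‖a n‖ ^ 2) := by
    have h := ha_reg 0
    simpa using h
  have hK1 : Summable (fun n : ℤ × ℤ => (1 + ksq (wn L₁ L₂ n)) * ‖a n‖ ^ 2) := by
    have h := ha_reg 1
    simpa using h
  have hKa : Summable (fun n : ℤ × ℤ => ksq (wn L₁ L₂ n) * ‖a n‖ ^ 2) := by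
    refine Summable.of_nonneg_of_le
      (fun n => mul_nonneg (hksq_nn _) (sq_nonneg _)) (fun n => ?_) hK1
    nlinarith [hksq_nn (wn L₁ L₂ n), sq_nonneg ‖a n‖]
  have hwn2_le : ∀ n : ℤ × ℤ, (wn L₁ L₂ n).2 ^ 2 ≤ 1 + ksq (wn L₁ L₂ n) := by
    intro n
    have h1 := sq_nonneg (wn L₁ L₂ n).1
    simp only [ksq]
    nlinarith
  have hgy2 : Summable (fun n : ℤ × ℤ => (|(wn L₁ L₂ n).2| * ‖a n‖) ^ 2) := by
    refine Summable.of_nonneg_of_le (fun n => sq_nonneg _) (fun n => ?_) hK1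
    rw [mul_pow, sq_abs]
    exact mul_le_mul_of_nonneg_right (hwn2_le n) (sq_nonneg _)
  have hb2 : Summable (fun n : ℤ × ℤ => ‖b n‖ ^ 2) := by
    have h := hb_reg 0
    simpa using h
  have hKb1 : Summable (fun n : ℤ × ℤ => (1 + ksq (wn L₁ L₂ n)) * ‖b n‖ ^ 2) := by
    have h := hb_reg 1
    simpa using h
  have hby2 : Summable (fun n : ℤ × ℤ => (wn L₁ L₂ n).2 ^ 2 * ‖b n‖ ^ 2) := by
    refine Summable.of_nonneg_of_le
      (fun n => mul_nonneg (sq_nonneg _) (sq_nonneg _)) (fun n => ?_) hKb1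
    exact mul_le_mul_of_nonneg_right (hwn2_le n) (sq_nonneg _)
  -- zonal reduction to a 1-D lattice
  have e_inj : Function.Injective (fun m : ℤ => ((0 : ℤ), m)) := by
    intro x y h
    simpa [Prod.ext_iff] using h
  have hb_range : ∀ n : ℤ × ℤ, n ∉ Set.range (fun m : ℤ => ((0 : ℤ), m)) → b n = 0 := by
    intro n hn
    by_contra hbn
    have h1 : n.1 = 0 := by
      by_contra h1
      exact hbn (hb_supp n h1)
    exact hn ⟨n.2, Prod.ext h1.symm rfl⟩
  have hcf0 : ‖b ((0 : ℤ), (0 : ℤ))‖ = 0 := by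
    rw [show (((0 : ℤ), (0 : ℤ)) : ℤ × ℤ) = 0 from rfl, hb0, norm_zero]
  have hcf2 : Summable (fun m : ℤ => ‖b ((0 : ℤ), m)‖ ^ 2) :=
    hb2.comp_injective e_inj
  have hwne : ∀ m : ℤ, (wn L₁ L₂ ((0 : ℤ), m)).2 = 2 * Real.pi * (m : ℝ) / L₂ := by
    intro m
    simp [wn]
  have hcfm2 : Summable (fun m : ℤ => (m : ℝ) ^ 2 * ‖b ((0 : ℤ), m)‖ ^ 2) := by
    have h := (hby2.comp_injective e_inj).mul_left ((L₂ / (2 * Real.pi)) ^ 2)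
    refine h.congr (fun m => ?_)
    show (L₂ / (2 * Real.pi)) ^ 2 * ((wn L₁ L₂ ((0 : ℤ), m)).2 ^ 2 * ‖b ((0 : ℤ), m)‖ ^ 2)
      = (m : ℝ) ^ 2 * ‖b ((0 : ℤ), m)‖ ^ 2
    rw [hwne m]
    field_simp
  obtain ⟨hcf_sum, hcf_bound⟩ := agmon13 (fun m : ℤ => ‖b ((0 : ℤ), m)‖)
    (fun m => norm_nonneg _) hcf0 hcf2 hcfm2
  have hβ1 : Summable (fun n : ℤ × ℤ => ‖b n‖) := by
    refine (e_inj.summable_iff ?_).mp hcf_sum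
    intro n hn
    rw [hb_range n hn, norm_zero]
  have hsupp1 : Function.support (fun n : ℤ × ℤ => ‖b n‖)
      ⊆ Set.range (fun m : ℤ => ((0 : ℤ), m)) := by
    intro n hn
    by_contra h
    exact hn (by simp [hb_range n h])
  have hsupp2 : Function.support (fun n : ℤ × ℤ => ‖b n‖ ^ 2)
      ⊆ Set.range (fun m : ℤ => ((0 : ℤ), m)) := by
    intro n hn
    by_contra h
    exact hn (by simp [hb_range n h])
  have hsupp3 : Function.support (fun n : ℤ × ℤ => (wn L₁ L₂ n).2 ^ 2 * ‖b n‖ ^ 2)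
      ⊆ Set.range (fun m : ℤ => ((0 : ℤ), m)) := by
    intro n hn
    by_contra h
    exact hn (by simp [hb_range n h])
  have hBsum_eq : ∑' n : ℤ × ℤ, ‖b n‖ = ∑' m : ℤ, ‖b ((0 : ℤ), m)‖ :=
    (e_inj.tsum_eq hsupp1).symm
  have hXm_eq : ∑' n : ℤ × ℤ, ‖b n‖ ^ 2 = ∑' m : ℤ, ‖b ((0 : ℤ), m)‖ ^ 2 :=
    (e_inj.tsum_eq hsupp2).symm
  have hYm_eq : ∑' n : ℤ × ℤ, (wn L₁ L₂ n).2 ^ 2 * ‖b n‖ ^ 2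
      = (2 * Real.pi / L₂) ^ 2 * ∑' m : ℤ, (m : ℝ) ^ 2 * ‖b ((0 : ℤ), m)‖ ^ 2 := by
    have step1 : ∑' n : ℤ × ℤ, (wn L₁ L₂ n).2 ^ 2 * ‖b n‖ ^ 2
        = ∑' m : ℤ, (wn L₁ L₂ ((0 : ℤ), m)).2 ^ 2 * ‖b ((0 : ℤ), m)‖ ^ 2 :=
      (e_inj.tsum_eq hsupp3).symm
    have step2 : ∀ m : ℤ, (wn L₁ L₂ ((0 : ℤ), m)).2 ^ 2 * ‖b ((0 : ℤ), m)‖ ^ 2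
        = (2 * Real.pi / L₂) ^ 2 * ((m : ℝ) ^ 2 * ‖b ((0 : ℤ), m)‖ ^ 2) := by
      intro m
      rw [hwne m]
      field_simp
    rw [step1, tsum_congr step2, tsum_mul_left]
  -- abbreviations
  set G := ∑' n : ℤ × ℤ, ‖a n‖ ^ 2 with hGdef
  set K := ∑' n : ℤ × ℤ, ksq (wn L₁ L₂ n) * ‖a n‖ ^ 2 with hKdef
  set Gy := ∑' n : ℤ × ℤ, (|(wn L₁ L₂ n).2| * ‖a n‖) ^ 2 with hGydef
  set Xm := ∑' m : ℤ, ‖b ((0 : ℤ), m)‖ ^ 2 with hXmdef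
  set Ym := ∑' m : ℤ, (m : ℝ) ^ 2 * ‖b ((0 : ℤ), m)‖ ^ 2 with hYmdef
  set Bs := ∑' m : ℤ, ‖b ((0 : ℤ), m)‖ with hBsdef
  have hGnn : 0 ≤ G := hGdef ▸ tsum_nonneg (fun n => sq_nonneg _)
  have hKnn : 0 ≤ K := hKdef ▸ tsum_nonneg (fun n => mul_nonneg (hksq_nn _) (sq_nonneg _))
  have hGynn : 0 ≤ Gy := hGydef ▸ tsum_nonneg (fun n => sq_nonneg _)
  have hXmnn : 0 ≤ Xm := hXmdef ▸ tsum_nonneg (fun n => sq_nonneg _)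
  have hYmnn : 0 ≤ Ym := hYmdef ▸ tsum_nonneg (fun n => mul_nonneg (sq_nonneg _) (sq_nonneg _))
  have hBsnn : 0 ≤ Bs := hBsdef ▸ tsum_nonneg (fun n => norm_nonneg _)
  have hGyK : Gy ≤ K := by
    rw [hGydef, hKdef]
    refine Summable.tsum_le_tsum (fun n => ?_) hgy2 hKa
    rw [mul_pow, sq_abs]
    have h1 : (wn L₁ L₂ n).2 ^ 2 ≤ ksq (wn L₁ L₂ n) := by
      simp only [ksq]
      nlinarith [sq_nonneg (wn L₁ L₂ n).1]
    exact mul_le_mul_of_nonneg_right h1 (sq_nonneg _)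
  have hBs_bound : Bs ≤ 3 * (Real.sqrt (Real.sqrt Ym) * Real.sqrt (Real.sqrt Xm)) := by
    have h1 : Bs ≤ 3 * Real.sqrt (Real.sqrt Ym * Real.sqrt Xm) := hcf_bound
    rwa [Real.sqrt_mul (Real.sqrt_nonneg _)] at h1
  -- the summand bound
  set F : (ℤ × ℤ) × (ℤ × ℤ) → ℝ :=
    fun p => |(wn L₁ L₂ (p.1 + p.2)).2| * (‖a p.1‖ * ‖a p.2‖ * ‖b (p.1 + p.2)‖) with hFdef
  set F₁ : (ℤ × ℤ) × (ℤ × ℤ) → ℝ :=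
    fun p => (|(wn L₁ L₂ p.1).2| * ‖a p.1‖) * ‖a p.2‖ * ‖b (p.1 + p.2)‖ with hF1def
  set F₂ : (ℤ × ℤ) × (ℤ × ℤ) → ℝ :=
    fun p => ‖a p.1‖ * (|(wn L₁ L₂ p.2).2| * ‖a p.2‖) * ‖b (p.1 + p.2)‖ with hF2def
  have hFnn : ∀ p, 0 ≤ F p := fun p => by
    simp only [hFdef]
    positivity
  have hF_le : ∀ p, F p ≤ F₁ p + F₂ p := by
    intro p
    have hadd : (wn L₁ L₂ (p.1 + p.2)).2 = (wn L₁ L₂ p.1).2 + (wn L₁ L₂ p.2).2 := by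
      simp only [wn, Prod.snd_add]
      push_cast
      ring
    have habs : |(wn L₁ L₂ (p.1 + p.2)).2| ≤ |(wn L₁ L₂ p.1).2| + |(wn L₁ L₂ p.2).2| := by
      rw [hadd]
      exact abs_add_le _ _
    have hnn : (0:ℝ) ≤ ‖a p.1‖ * ‖a p.2‖ * ‖b (p.1 + p.2)‖ := by positivity
    have h2 := mul_le_mul_of_nonneg_right habs hnn
    simp only [hFdef, hF1def, hF2def]
    nlinarith [h2]
  have hfin1 := conv_bound13 (fun n => |(wn L₁ L₂ n).2| * ‖a n‖) (fun n => ‖a n‖)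
    (fun n => ‖b n‖) (fun n => by positivity) (fun n => norm_nonneg _)
    (fun n => norm_nonneg _) hgy2 hg2 hβ1
  have hfin2 := conv_bound13 (fun n => ‖a n‖) (fun n => |(wn L₁ L₂ n).2| * ‖a n‖)
    (fun n => ‖b n‖) (fun n => norm_nonneg _) (fun n => by positivity)
    (fun n => norm_nonneg _) hg2 hgy2 hβ1
  have hSumF1 : Summable F₁ :=
    summable_of_sum_le (fun p => by simp only [hF1def]; positivity) hfin1
  have hSumF2 : Summable F₂ :=
    summable_of_sum_le (fun p => by simp only [hF2def]; positivity) hfin2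
  have hT1 : ∑' p, F₁ p ≤ Real.sqrt Gy * Real.sqrt G * Bs := by
    rw [hGydef, hGdef, ← hBsum_eq]
    exact Summable.tsum_le_of_sum_le hSumF1 hfin1
  have hT2 : ∑' p, F₂ p ≤ Real.sqrt G * Real.sqrt Gy * Bs := by
    rw [hGydef, hGdef, ← hBsum_eq]
    exact Summable.tsum_le_of_sum_le hSumF2 hfin2
  have hSumF : Summable F :=
    Summable.of_nonneg_of_le hFnn hF_le (hSumF1.add hSumF2)
  have hTF : ∑' p, F p ≤ 2 * (Real.sqrt Gy * Real.sqrt G * Bs) := by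
    have h1 := Summable.tsum_le_tsum hF_le hSumF (hSumF1.add hSumF2)
    rw [Summable.tsum_add hSumF1 hSumF2] at h1
    have hcomm : Real.sqrt G * Real.sqrt Gy * Bs = Real.sqrt Gy * Real.sqrt G * Bs := by ring
    linarith [hT1, hT2, h1]
  -- norm of each summand
  have hexp : ∀ r : ℝ,
      ‖Complex.exp (-Complex.I * (r : ℂ) * ((t : ℝ) : ℂ) / ((ε : ℝ) : ℂ))‖ = 1 := by
    intro r
    have hz : (-Complex.I * (r : ℂ) * ((t : ℝ) : ℂ) / ((ε : ℝ) : ℂ))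
        = ((-(r * t / ε) : ℝ) : ℂ) * Complex.I := by
      push_cast
      ring
    rw [hz, Complex.norm_exp_ofReal_mul_I]
  have hterm_norm : ∀ p : {q : (ℤ × ℤ) × (ℤ × ℤ) //
      q.1.1 ≠ 0 ∧ q.2.1 ≠ 0 ∧ (q.1 + q.2).1 = 0 ∧ Om L₁ L₂ q.1 + Om L₁ L₂ q.2 ≠ 0},
      ‖(((wn L₁ L₂ (p.1.1 + p.1.2)).2 : ℝ) : ℂ) * a p.1.1 * a p.1.2 *
        (starRingEnd ℂ) (b (p.1.1 + p.1.2)) *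
        Complex.exp (-Complex.I * ((Om L₁ L₂ p.1.1 + Om L₁ L₂ p.1.2 : ℝ) : ℂ) *
          ((t : ℝ) : ℂ) / ((ε : ℝ) : ℂ))‖ = F p.1 := by
    intro p
    rw [norm_mul, norm_mul, norm_mul, norm_mul, hexp, Complex.norm_real,
      RCLike.norm_conj, Real.norm_eq_abs]
    simp only [hFdef]
    ring
  have hFsub : Summable (fun p : {q : (ℤ × ℤ) × (ℤ × ℤ) //
      q.1.1 ≠ 0 ∧ q.2.1 ≠ 0 ∧ (q.1 + q.2).1 = 0 ∧ Om L₁ L₂ q.1 + Om L₁ L₂ q.2 ≠ 0} => F p.1) :=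
    hSumF.comp_injective Subtype.val_injective
  have hnorm_summable : Summable (fun p : {q : (ℤ × ℤ) × (ℤ × ℤ) //
      q.1.1 ≠ 0 ∧ q.2.1 ≠ 0 ∧ (q.1 + q.2).1 = 0 ∧ Om L₁ L₂ q.1 + Om L₁ L₂ q.2 ≠ 0} =>
      ‖(((wn L₁ L₂ (p.1.1 + p.1.2)).2 : ℝ) : ℂ) * a p.1.1 * a p.1.2 *
        (starRingEnd ℂ) (b (p.1.1 + p.1.2)) *
        Complex.exp (-Complex.I * ((Om L₁ L₂ p.1.1 + Om L₁ L₂ p.1.2 : ℝ) : ℂ) *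
          ((t : ℝ) : ℂ) / ((ε : ℝ) : ℂ))‖) :=
    hFsub.congr (fun p => (hterm_norm p).symm)
  have hsub_le : ∑' p : {q : (ℤ × ℤ) × (ℤ × ℤ) //
      q.1.1 ≠ 0 ∧ q.2.1 ≠ 0 ∧ (q.1 + q.2).1 = 0 ∧ Om L₁ L₂ q.1 + Om L₁ L₂ q.2 ≠ 0}, F p.1
      ≤ ∑' p, F p := by
    have h1 : ∑' p : {q : (ℤ × ℤ) × (ℤ × ℤ) //
        q.1.1 ≠ 0 ∧ q.2.1 ≠ 0 ∧ (q.1 + q.2).1 = 0 ∧ Om L₁ L₂ q.1 + Om L₁ L₂ q.2 ≠ 0}, F p.1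
        = ∑' p, Set.indicator {q : (ℤ × ℤ) × (ℤ × ℤ) |
            q.1.1 ≠ 0 ∧ q.2.1 ≠ 0 ∧ (q.1 + q.2).1 = 0 ∧ Om L₁ L₂ q.1 + Om L₁ L₂ q.2 ≠ 0} F p :=
      tsum_subtype _ F
    rw [h1]
    exact Summable.tsum_le_tsum (fun p => Set.indicator_le_self' (fun x _ => hFnn x) p)
      (hSumF.indicator _) hSumF
  have hmain : ‖∑' p : {q : (ℤ × ℤ) × (ℤ × ℤ) //
      q.1.1 ≠ 0 ∧ q.2.1 ≠ 0 ∧ (q.1 + q.2).1 = 0 ∧ Om L₁ L₂ q.1 + Om L₁ L₂ q.2 ≠ 0},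
      (((wn L₁ L₂ (p.1.1 + p.1.2)).2 : ℝ) : ℂ) * a p.1.1 * a p.1.2 *
        (starRingEnd ℂ) (b (p.1.1 + p.1.2)) *
        Complex.exp (-Complex.I * ((Om L₁ L₂ p.1.1 + Om L₁ L₂ p.1.2 : ℝ) : ℂ) *
          ((t : ℝ) : ℂ) / ((ε : ℝ) : ℂ))‖ ≤ 2 * (Real.sqrt Gy * Real.sqrt G * Bs) := by
    refine le_trans (norm_tsum_le_tsum_norm hnorm_summable) ?_
    rw [tsum_congr hterm_norm]
    exact hsub_le.trans hTF
  -- relate the hsq quantities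
  have h_hsq0a : hsq L₁ L₂ 0 a = (L₁ * L₂) * G := by
    simp only [hsq]
    rw [hGdef]
    congr 1
    exact tsum_congr (fun n => by rw [Real.rpow_zero, one_mul])
  have h_hsq1a : hsq L₁ L₂ 1 a = (L₁ * L₂) * K := by
    simp only [hsq]
    rw [hKdef]
    congr 1
    exact tsum_congr (fun n => by rw [Real.rpow_one])
  have h_hsq0b : hsq L₁ L₂ 0 b = (L₁ * L₂) * Xm := by
    simp only [hsq]
    rw [← hXm_eq]
    congr 1
    exact tsum_congr (fun n => by rw [Real.rpow_zero, one_mul])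
  have h_hsq0dyb : hsq L₁ L₂ 0 (dy L₁ L₂ b)
      = (L₁ * L₂) * ((2 * Real.pi / L₂) ^ 2 * Ym) := by
    simp only [hsq]
    rw [← hYm_eq]
    congr 1
    refine tsum_congr (fun n => ?_)
    rw [Real.rpow_zero, one_mul]
    simp only [dy]
    rw [norm_mul, norm_mul, Complex.norm_I, one_mul, Complex.norm_real, Real.norm_eq_abs,
      mul_pow, sq_abs]
  -- sqrt decompositions
  have hMnn : (0:ℝ) ≤ L₁ * L₂ := hM.le
  have e1 : Real.sqrt (hsq L₁ L₂ 0 a) = Real.sqrt (L₁ * L₂) * Real.sqrt G := by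
    rw [h_hsq0a, Real.sqrt_mul hMnn]
  have e2 : Real.sqrt (hsq L₁ L₂ 1 a) = Real.sqrt (L₁ * L₂) * Real.sqrt K := by
    rw [h_hsq1a, Real.sqrt_mul hMnn]
  have e3 : Real.sqrt (Real.sqrt (hsq L₁ L₂ 0 b))
      = Real.sqrt (Real.sqrt (L₁ * L₂)) * Real.sqrt (Real.sqrt Xm) := by
    rw [h_hsq0b, Real.sqrt_mul hMnn, Real.sqrt_mul (Real.sqrt_nonneg _)]
  have e4 : Real.sqrt (Real.sqrt (hsq L₁ L₂ 0 (dy L₁ L₂ b)))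
      = Real.sqrt (Real.sqrt (L₁ * L₂)) *
        (Real.sqrt (2 * Real.pi / L₂) * Real.sqrt (Real.sqrt Ym)) := by
    rw [h_hsq0dyb, Real.sqrt_mul hMnn, Real.sqrt_mul (sq_nonneg _),
      Real.sqrt_sq (by positivity : (0:ℝ) ≤ 2 * Real.pi / L₂),
      Real.sqrt_mul (Real.sqrt_nonneg _),
      Real.sqrt_mul (by positivity : (0:ℝ) ≤ 2 * Real.pi / L₂)]
  -- final assembly
  rw [norm_mul]
  have hfac : ‖((L₁ * L₂ : ℝ) : ℂ) / (2 * Complex.I)‖ = (L₁ * L₂) / 2 := by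
    have h2I : ‖(2 * Complex.I : ℂ)‖ = 2 := by simp
    rw [norm_div, Complex.norm_real, Real.norm_eq_abs, abs_of_pos hM, h2I]
  rw [hfac, e1, e2, e3, e4]
  refine le_trans (mul_le_mul_of_nonneg_left hmain
    (by positivity : (0:ℝ) ≤ (L₁ * L₂) / 2)) ?_
  -- scalar identities
  have hs1 : Real.sqrt (L₁ * L₂) * Real.sqrt (L₁ * L₂) = L₁ * L₂ := Real.mul_self_sqrt hMnn
  have hs2 : Real.sqrt (Real.sqrt (L₁ * L₂)) * Real.sqrt (Real.sqrt (L₁ * L₂))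
      = Real.sqrt (L₁ * L₂) := Real.mul_self_sqrt (Real.sqrt_nonneg _)
  have hs3 : Real.sqrt (L₁ * L₂) * Real.sqrt (2 * Real.pi / L₂)
      = Real.sqrt (2 * Real.pi * L₁) := by
    rw [← Real.sqrt_mul hMnn]
    congr 1
    field_simp
  have hs4 : 3 / Real.sqrt (2 * Real.pi * L₁) * Real.sqrt (2 * Real.pi * L₁) = 3 :=
    div_mul_cancel₀ 3 (ne_of_gt (Real.sqrt_pos.mpr (by positivity)))
  have hRHS : 3 / Real.sqrt (2 * Real.pi * L₁) * (Real.sqrt (L₁ * L₂) * Real.sqrt G) *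
        (Real.sqrt (L₁ * L₂) * Real.sqrt K) *
        (Real.sqrt (Real.sqrt (L₁ * L₂)) * Real.sqrt (Real.sqrt Xm)) *
        (Real.sqrt (Real.sqrt (L₁ * L₂)) *
          (Real.sqrt (2 * Real.pi / L₂) * Real.sqrt (Real.sqrt Ym)))
      = (L₁ * L₂) * (Real.sqrt K * Real.sqrt G *
          (3 * (Real.sqrt (Real.sqrt Ym) * Real.sqrt (Real.sqrt Xm)))) := by
    calc 3 / Real.sqrt (2 * Real.pi * L₁) * (Real.sqrt (L₁ * L₂) * Real.sqrt G) *
          (Real.sqrt (L₁ * L₂) * Real.sqrt K) *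
          (Real.sqrt (Real.sqrt (L₁ * L₂)) * Real.sqrt (Real.sqrt Xm)) *
          (Real.sqrt (Real.sqrt (L₁ * L₂)) *
            (Real.sqrt (2 * Real.pi / L₂) * Real.sqrt (Real.sqrt Ym)))
        = 3 / Real.sqrt (2 * Real.pi * L₁) *
            ((Real.sqrt (Real.sqrt (L₁ * L₂)) * Real.sqrt (Real.sqrt (L₁ * L₂))) *
              Real.sqrt (2 * Real.pi / L₂)) *
            ((Real.sqrt (L₁ * L₂) * Real.sqrt (L₁ * L₂)) *
              (Real.sqrt G * Real.sqrt K * (Real.sqrt (Real.sqrt Xm) *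
                Real.sqrt (Real.sqrt Ym)))) := by ring
      _ = 3 / Real.sqrt (2 * Real.pi * L₁) *
            (Real.sqrt (L₁ * L₂) * Real.sqrt (2 * Real.pi / L₂)) *
            ((L₁ * L₂) * (Real.sqrt G * Real.sqrt K * (Real.sqrt (Real.sqrt Xm) *
                Real.sqrt (Real.sqrt Ym)))) := by rw [hs2, hs1]
      _ = 3 / Real.sqrt (2 * Real.pi * L₁) * Real.sqrt (2 * Real.pi * L₁) *
            ((L₁ * L₂) * (Real.sqrt G * Real.sqrt K * (Real.sqrt (Real.sqrt Xm) *
                Real.sqrt (Real.sqrt Ym)))) := by rw [hs3]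
      _ = 3 * ((L₁ * L₂) * (Real.sqrt G * Real.sqrt K * (Real.sqrt (Real.sqrt Xm) *
                Real.sqrt (Real.sqrt Ym)))) := by rw [hs4]
      _ = (L₁ * L₂) * (Real.sqrt K * Real.sqrt G *
            (3 * (Real.sqrt (Real.sqrt Ym) * Real.sqrt (Real.sqrt Xm)))) := by ring
  rw [hRHS]
  calc (L₁ * L₂) / 2 * (2 * (Real.sqrt Gy * Real.sqrt G * Bs))
      = (L₁ * L₂) * (Real.sqrt Gy * Real.sqrt G * Bs) := by ring
    _ ≤ (L₁ * L₂) * (Real.sqrt K * Real.sqrt G *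
          (3 * (Real.sqrt (Real.sqrt Ym) * Real.sqrt (Real.sqrt Xm)))) := by
        refine mul_le_mul_of_nonneg_left ?_ hMnn
        refine mul_le_mul (mul_le_mul_of_nonneg_right
          (Real.sqrt_le_sqrt hGyK) (Real.sqrt_nonneg G)) hBs_bound hBsnn (by positivity)

end
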